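/- Let α ∈ (0,1), let f : [0,1] × [0,1] → ℝ be continuous, let φ ∈ C¹([0,1]), ψ₁ ∈ C¹([0,1]), ψ₂ ∈ C([0,1]), and let u : [0,1] × [0,1] → ℝ be three times continuously differentiable and satisfy the time-fractional Benjamin–Bona–Mahony–Burgers equation C D^α_t u(x,t) − ∂ₜ∂ₓ∂ₓu(x,t) + ∂ₓu(x,t) + u(x,t)·∂ₓu(x,t) = f(x,t) for all (x,t) ∈ (0,1) × (0,1], together with u(x,0) = φ(x), u(0,t) = ψ₁(t), u(1,t) = ψ₂(t). Then v(x,t) = ∂ₜ∂ₓu(x,t) satisfies, for all (x,t) ∈ (0,1) × (0,1], the transformed fractional partial-integro differential equation ∫₀ˣ I^{1−α}[v(ξ,·)](t) dξ − ∂ₓv(x,t) + ( ∫₀ᵗ v(x,τ) dτ + φ′(x) ) · ( 1 + φ(x) − φ(0) + ψ₁(t) + ∫₀ᵗ ∫₀ˣ v(ξ,τ) dξ dτ ) = f(x,t) − C D^α ψ₁(t). -/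

import Mathlib

open Set Real MeasureTheory

namespace S6

noncomputable def P1 (g : ℝ × ℝ → ℝ) : ℝ × ℝ → ℝ := fun p => fderiv ℝ g p (1, 0)
noncomputable def P2 (g : ℝ × ℝ → ℝ) : ℝ × ℝ → ℝ := fun p => fderiv ℝ g p (0, 1)

lemma hasDerivAt_fst {g : ℝ × ℝ → ℝ} (hg : Differentiable ℝ g) (x t : ℝ) :
    HasDerivAt (fun y => g (y, t)) (P1 g (x, t)) x := by
  have h := ((hg (x, t)).hasFDerivAt).comp_hasDerivAt x
      ((hasDerivAt_id x).prodMk (hasDerivAt_const x t))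
  exact h

lemma hasDerivAt_snd {g : ℝ × ℝ → ℝ} (hg : Differentiable ℝ g) (x t : ℝ) :
    HasDerivAt (fun s => g (x, s)) (P2 g (x, t)) t := by
  have h := ((hg (x, t)).hasFDerivAt).comp_hasDerivAt t
      ((hasDerivAt_const t x).prodMk (hasDerivAt_id t))
  exact h

lemma deriv_fst {g : ℝ × ℝ → ℝ} (hg : Differentiable ℝ g) (x t : ℝ) :
    deriv (fun y => g (y, t)) x = P1 g (x, t) := (hasDerivAt_fst hg x t).deriv

lemma deriv_snd {g : ℝ × ℝ → ℝ} (hg : Differentiable ℝ g) (x t : ℝ) :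
    deriv (fun s => g (x, s)) t = P2 g (x, t) := (hasDerivAt_snd hg x t).deriv

lemma contDiff_P1 {n : WithTop ℕ∞} {g : ℝ × ℝ → ℝ} (hg : ContDiff ℝ (n + 1) g) :
    ContDiff ℝ n (P1 g) :=
  (hg.fderiv_right le_rfl).clm_apply contDiff_const

lemma contDiff_P2 {n : WithTop ℕ∞} {g : ℝ × ℝ → ℝ} (hg : ContDiff ℝ (n + 1) g) :
    ContDiff ℝ n (P2 g) :=
  (hg.fderiv_right le_rfl).clm_apply contDiff_const

lemma sym {g : ℝ × ℝ → ℝ} (hg : ContDiff ℝ 2 g) (p : ℝ × ℝ) :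
    P1 (P2 g) p = P2 (P1 g) p := by
  have hd : DifferentiableAt ℝ (fderiv ℝ g) p :=
    ((hg.fderiv_right (m := 1) (by norm_num)).differentiable one_ne_zero) p
  have key : ∀ z w : ℝ × ℝ, fderiv ℝ (fun q => fderiv ℝ g q z) p w
      = fderiv ℝ (fderiv ℝ g) p w z := by
    intro z w
    have h := (((ContinuousLinearMap.apply ℝ ℝ z).hasFDerivAt).comp p
      hd.hasFDerivAt).fderiv
    have e : (⇑(ContinuousLinearMap.apply ℝ ℝ z) ∘ fderiv ℝ g)
        = fun q => fderiv ℝ g q z := rfl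
    rw [e] at h
    rw [h]; rfl
  have hsymm := ((hg.contDiffAt (x := p)).isSymmSndFDerivAt (by simp [minSmoothness_of_isRCLikeNormedField])).eq
    ((0 : ℝ), (1 : ℝ)) ((1 : ℝ), (0 : ℝ))
  show fderiv ℝ (fun q => fderiv ℝ g q ((0:ℝ), (1:ℝ))) p (1, 0)
      = fderiv ℝ (fun q => fderiv ℝ g q ((1:ℝ), (0:ℝ))) p (0, 1)
  rw [key, key]
  exact hsymm.symm

lemma ftc {g g' : ℝ → ℝ} (h : ∀ τ, HasDerivAt g (g' τ) τ) (hc : Continuous g')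
    (a b : ℝ) : ∫ τ in a..b, g' τ = g b - g a :=
  intervalIntegral.integral_eq_sub_of_hasDerivAt (fun τ _ => h τ)
    (hc.intervalIntegrable a b)

end S6

namespace S6

lemma swapInt {F : ℝ → ℝ → ℝ} {x t : ℝ} (hx : 0 ≤ x) (ht : 0 ≤ t)
    (hF : Integrable (Function.uncurry F)
      ((volume.restrict (Ioc 0 x)).prod (volume.restrict (Ioc 0 t)))) :
    ∫ ξ in (0:ℝ)..x, ∫ τ in (0:ℝ)..t, F ξ τ
      = ∫ τ in (0:ℝ)..t, ∫ ξ in (0:ℝ)..x, F ξ τ := by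
  rw [intervalIntegral.integral_of_le hx, intervalIntegral.integral_of_le ht]
  simp_rw [intervalIntegral.integral_of_le ht, intervalIntegral.integral_of_le hx]
  exact MeasureTheory.integral_integral_swap hF

lemma intgH {g : ℝ × ℝ → ℝ} (hg : Continuous g) {K : ℝ → ℝ} {x t : ℝ}
    (hKm : Measurable K) (hKi : IntegrableOn K (Ioc 0 t) volume)
    (hK0 : ∀ τ ∈ Ioc (0:ℝ) t, 0 ≤ K τ) :
    Integrable (fun p : ℝ × ℝ => K p.2 * g p)
      ((volume.restrict (Ioc 0 x)).prod (volume.restrict (Ioc 0 t))) := by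
  obtain ⟨C, hC⟩ := (isCompact_Icc.prod isCompact_Icc :
    IsCompact (Icc (0:ℝ) x ×ˢ Icc (0:ℝ) t)).exists_bound_of_continuousOn hg.continuousOn
  have hconst : Integrable (fun _ : ℝ => C) (volume.restrict (Ioc 0 x)) :=
    integrableOn_const measure_Ioc_lt_top.ne
  have hbound : Integrable (fun z : ℝ × ℝ => (fun _ : ℝ => C) z.1 * K z.2)
      ((volume.restrict (Ioc 0 x)).prod (volume.restrict (Ioc 0 t))) :=
    hconst.mul_prod hKi
  refine hbound.mono' ?_ ?_
  · exact ((hKm.comp measurable_snd).mul hg.measurable).aestronglyMeasurable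
  · rw [Measure.prod_restrict]
    filter_upwards [ae_restrict_mem (measurableSet_Ioc.prod measurableSet_Ioc)]
      with p hp
    have h1 : 0 ≤ K p.2 := hK0 _ hp.2
    have h2 : ‖g p‖ ≤ C := hC p ⟨Ioc_subset_Icc_self hp.1, Ioc_subset_Icc_self hp.2⟩
    calc ‖K p.2 * g p‖ = K p.2 * ‖g p‖ := by
          rw [norm_mul, Real.norm_of_nonneg h1]
      _ ≤ K p.2 * C := mul_le_mul_of_nonneg_left h2 h1
      _ = C * K p.2 := mul_comm _ _

lemma intgH' {g : ℝ × ℝ → ℝ} (hg : Continuous g) {x t : ℝ} :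
    Integrable (fun p : ℝ × ℝ => g p)
      ((volume.restrict (Ioc 0 x)).prod (volume.restrict (Ioc 0 t))) := by
  simpa using intgH hg (K := fun _ => 1) measurable_const
    (integrableOn_const measure_Ioc_lt_top.ne) (fun τ _ => zero_le_one)

end S6

open Set Real

/-- If a C³ function `u` solves the time-fractional
Benjamin–Bona–Mahony–Burgers equation
`C D^α_t u − ∂ₜ∂ₓ∂ₓ u + ∂ₓ u + u ∂ₓ u = f` on `(0,1) × (0,1]` with data
`u x 0 = φ x`, `u 0 t = ψ₁ t`, `u 1 t = ψ₂ t`, then `v = ∂ₜ∂ₓ u` solves the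
transformed fractional partial-integro differential equation. -/
theorem statement6
    (α : ℝ) (hα : α ∈ Ioo (0:ℝ) 1)
    (f : ℝ → ℝ → ℝ) (φ ψ₁ ψ₂ : ℝ → ℝ) (u v : ℝ → ℝ → ℝ)
    (hf : ContinuousOn (fun p : ℝ × ℝ => f p.1 p.2) (Icc 0 1 ×ˢ Icc 0 1))
    (hφ : ContDiff ℝ 1 φ) (hψ₁ : ContDiff ℝ 1 ψ₁)
    (hψ₂ : ContinuousOn ψ₂ (Icc 0 1))
    (hu : ContDiff ℝ 3 (fun p : ℝ × ℝ => u p.1 p.2))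
    (hpde : ∀ x ∈ Ioo (0:ℝ) 1, ∀ t ∈ Ioc (0:ℝ) 1,
      (1 / Real.Gamma (1 - α)) * (∫ τ in (0:ℝ)..t, (t - τ) ^ (-α) * deriv (fun s => u x s) τ)
        - deriv (fun s => deriv (fun y => deriv (fun z => u z s) y) x) t
        + deriv (fun y => u y t) x
        + u x t * deriv (fun y => u y t) x = f x t)
    (hic : ∀ x ∈ Icc (0:ℝ) 1, u x 0 = φ x)
    (hbc1 : ∀ t ∈ Icc (0:ℝ) 1, u 0 t = ψ₁ t)
    (hbc2 : ∀ t ∈ Icc (0:ℝ) 1, u 1 t = ψ₂ t)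
    (hv : ∀ x t, v x t = deriv (fun s => deriv (fun y => u y s) x) t) :
    ∀ x ∈ Ioo (0:ℝ) 1, ∀ t ∈ Ioc (0:ℝ) 1,
      (∫ ξ in (0:ℝ)..x, (1 / Real.Gamma (1 - α)) * ∫ τ in (0:ℝ)..t, (t - τ) ^ (-α) * v ξ τ)
        - deriv (fun y => v y t) x
        + ((∫ τ in (0:ℝ)..t, v x τ) + deriv φ x)
            * (1 + φ x - φ 0 + ψ₁ t + ∫ τ in (0:ℝ)..t, ∫ ξ in (0:ℝ)..x, v ξ τ)
        = f x t - (1 / Real.Gamma (1 - α)) * ∫ τ in (0:ℝ)..t, (t - τ) ^ (-α) * deriv ψ₁ τ := by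
  obtain ⟨hα0, hα1⟩ := hα
  intro x hx t ht
  have hx0 : (0:ℝ) ≤ x := hx.1.le
  have ht0 : (0:ℝ) ≤ t := ht.1.le
  set U : ℝ × ℝ → ℝ := fun p => u p.1 p.2 with hUdef
  -- smoothness facts
  have hu3 : ContDiff ℝ ((2:WithTop ℕ∞) + 1) U := by
    have h : ((2:WithTop ℕ∞) + 1) = 3 := by norm_num
    rw [h]; exact hu
  have hu2 : ContDiff ℝ 2 U := hu.of_le (by norm_num)
  have hUd : Differentiable ℝ U := hu.differentiable (by norm_num)
  have hUx2 : ContDiff ℝ 2 (S6.P1 U) := S6.contDiff_P1 hu3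
  have hUt2 : ContDiff ℝ 2 (S6.P2 U) := S6.contDiff_P2 hu3
  have hUx21 : ContDiff ℝ ((1:WithTop ℕ∞) + 1) (S6.P1 U) := by
    have h : ((1:WithTop ℕ∞) + 1) = 2 := by norm_num
    rw [h]; exact hUx2
  have hUxd : Differentiable ℝ (S6.P1 U) := hUx2.differentiable (by norm_num)
  have hUtd : Differentiable ℝ (S6.P2 U) := hUt2.differentiable (by norm_num)
  have hUxt1 : ContDiff ℝ 1 (S6.P2 (S6.P1 U)) := S6.contDiff_P2 hUx21
  have hUxx1 : ContDiff ℝ 1 (S6.P1 (S6.P1 U)) := S6.contDiff_P1 hUx21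
  have hUxtc : Continuous (S6.P2 (S6.P1 U)) := hUxt1.continuous
  have hUxtd : Differentiable ℝ (S6.P2 (S6.P1 U)) := hUxt1.differentiable one_ne_zero
  have hUxxd : Differentiable ℝ (S6.P1 (S6.P1 U)) := hUxx1.differentiable one_ne_zero
  have hUxc : Continuous (S6.P1 U) := hUx2.continuous
  have hUtc : Continuous (S6.P2 U) := hUt2.continuous
  -- v representation
  have F1 : ∀ a b, v a b = S6.P2 (S6.P1 U) (a, b) := by
    intro a b
    rw [hv a b]
    have e1 : (fun s => deriv (fun y => u y s) a) = fun s => S6.P1 U (a, s) := by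
      funext s; exact S6.deriv_fst hUd a s
    rw [e1]
    exact S6.deriv_snd hUxd a b
  -- FTC in time for P1 U
  have hFt : ∀ a, ∫ τ in (0:ℝ)..t, S6.P2 (S6.P1 U) (a, τ)
      = S6.P1 U (a, t) - S6.P1 U (a, 0) := fun a =>
    S6.ftc (fun τ => S6.hasDerivAt_snd hUxd a τ)
      (hUxtc.comp (Continuous.prodMk_right a)) 0 t
  -- FTC in space for U
  have hFx : ∀ b, ∫ ξ in (0:ℝ)..x, S6.P1 U (ξ, b) = U (x, b) - U (0, b) := fun b =>
    S6.ftc (fun ξ => S6.hasDerivAt_fst hUd ξ b)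
      (hUxc.comp (continuous_id.prodMk continuous_const)) 0 x
  -- FTC in space for P2 U (uses symmetry of second derivatives)
  have hFxt : ∀ b, ∫ ξ in (0:ℝ)..x, S6.P2 (S6.P1 U) (ξ, b)
      = S6.P2 U (x, b) - S6.P2 U (0, b) := by
    intro b
    refine S6.ftc (g := fun ξ => S6.P2 U (ξ, b)) (fun ξ => ?_)
      (hUxtc.comp (continuous_id.prodMk continuous_const)) 0 x
    have h := S6.hasDerivAt_fst hUtd ξ b
    rwa [S6.sym hu2 (ξ, b)] at h
  -- derivative of φ
  have hφd : deriv φ x = S6.P1 U (x, 0) := by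
    have heq : φ =ᶠ[nhds x] fun y => U (y, 0) := by
      filter_upwards [isOpen_Ioo.mem_nhds hx] with y hy
      exact (hic y (Ioo_subset_Icc_self hy)).symm
    rw [heq.deriv_eq]
    exact S6.deriv_fst hUd x 0
  -- kernel facts
  have hKm : Measurable (fun τ : ℝ => (t - τ) ^ (-α)) := by fun_prop
  have hKint : IntervalIntegrable (fun τ : ℝ => (t - τ) ^ (-α)) volume 0 t := by
    have h0 : IntervalIntegrable (fun s : ℝ => s ^ (-α)) volume 0 t :=
      intervalIntegral.intervalIntegrable_rpow' (by linarith)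
    have h1 := (h0.comp_sub_left t).symm
    simpa using h1
  have hKi : IntegrableOn (fun τ : ℝ => (t - τ) ^ (-α)) (Ioc 0 t) volume := by
    rw [← Set.uIoc_of_le ht0]
    exact intervalIntegrable_iff.mp hKint
  have hK0 : ∀ τ ∈ Ioc (0:ℝ) t, 0 ≤ (t - τ) ^ (-α) := fun τ hτ =>
    Real.rpow_nonneg (by linarith [hτ.2]) _
  -- term C
  have hC : (∫ τ in (0:ℝ)..t, v x τ) + deriv φ x = S6.P1 U (x, t) := by
    have h1 : (∫ τ in (0:ℝ)..t, v x τ)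
        = ∫ τ in (0:ℝ)..t, S6.P2 (S6.P1 U) (x, τ) := by simp_rw [F1]
    rw [h1, hFt x, hφd]; ring
  -- term D
  have hD : 1 + φ x - φ 0 + ψ₁ t + (∫ τ in (0:ℝ)..t, ∫ ξ in (0:ℝ)..x, v ξ τ)
      = 1 + u x t := by
    have h1 : (∫ τ in (0:ℝ)..t, ∫ ξ in (0:ℝ)..x, v ξ τ)
        = ∫ ξ in (0:ℝ)..x, ∫ τ in (0:ℝ)..t, S6.P2 (S6.P1 U) (ξ, τ) := by
      simp_rw [F1]
      exact (S6.swapInt hx0 ht0 (by exact S6.intgH' hUxtc)).symm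
    have h2 : (∫ ξ in (0:ℝ)..x, ∫ τ in (0:ℝ)..t, S6.P2 (S6.P1 U) (ξ, τ))
        = ∫ ξ in (0:ℝ)..x, (S6.P1 U (ξ, t) - S6.P1 U (ξ, 0)) :=
      intervalIntegral.integral_congr (fun ξ _ => hFt ξ)
    have ct : ∀ b : ℝ, Continuous (fun ξ : ℝ => S6.P1 U (ξ, b)) := fun b =>
      hUxc.comp (continuous_id.prodMk continuous_const)
    have h3 : (∫ ξ in (0:ℝ)..x, (S6.P1 U (ξ, t) - S6.P1 U (ξ, 0)))
        = (U (x, t) - U (0, t)) - (U (x, 0) - U (0, 0)) := by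
      rw [intervalIntegral.integral_sub ((ct t).intervalIntegrable 0 x)
        ((ct 0).intervalIntegrable 0 x), hFx t, hFx 0]
    have e1 : U (0, t) = ψ₁ t := hbc1 t ⟨ht0, ht.2⟩
    have e2 : U (x, 0) = φ x := hic x ⟨hx0, hx.2.le⟩
    have e3 : U (0, 0) = φ 0 := hic 0 ⟨le_rfl, zero_le_one⟩
    have e4 : U (x, t) = u x t := rfl
    rw [h1, h2, h3, e1, e2, e3, e4]; ring
  -- term B
  have hB : deriv (fun y => v y t) x
      = deriv (fun s => deriv (fun y => deriv (fun z => u z s) y) x) t := by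
    have l1 : (fun y => v y t) = fun y => S6.P2 (S6.P1 U) (y, t) :=
      funext fun y => F1 y t
    have r1 : (fun s => deriv (fun y => deriv (fun z => u z s) y) x)
        = fun s => S6.P1 (S6.P1 U) (x, s) := by
      funext s
      have e : (fun y => deriv (fun z => u z s) y) = fun y => S6.P1 U (y, s) := by
        funext y; exact S6.deriv_fst hUd y s
      rw [e]
      exact S6.deriv_fst hUxd x s
    rw [l1, r1, S6.deriv_fst hUxtd x t, S6.deriv_snd hUxxd x t]
    exact S6.sym hUx2 (x, t)
  -- a.e. identification of deriv ψ₁ with P2 U (0, ·)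
  have hψae : (∫ τ in (0:ℝ)..t, (t - τ) ^ (-α) * S6.P2 U (0, τ))
      = ∫ τ in (0:ℝ)..t, (t - τ) ^ (-α) * deriv ψ₁ τ := by
    apply intervalIntegral.integral_congr_ae
    have hne : ∀ᵐ τ : ℝ, τ ≠ t := by
      have hs : {τ : ℝ | ¬ τ ≠ t} = {t} := by ext a; simp
      rw [MeasureTheory.ae_iff, hs]
      exact measure_singleton t
    filter_upwards [hne] with τ hτ hmem
    rw [Set.uIoc_of_le ht0] at hmem
    have hτ1 : τ ∈ Ioo (0:ℝ) 1 :=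
      ⟨hmem.1, lt_of_lt_of_le (lt_of_le_of_ne hmem.2 hτ) ht.2⟩
    have heq : (fun s => U (0, s)) =ᶠ[nhds τ] ψ₁ := by
      filter_upwards [isOpen_Ioo.mem_nhds hτ1] with s hs
      exact hbc1 s (Ioo_subset_Icc_self hs)
    have hder : deriv ψ₁ τ = S6.P2 U (0, τ) := by
      rw [← heq.deriv_eq]
      exact S6.deriv_snd hUd 0 τ
    rw [hder]
  -- term A
  have hA : (∫ ξ in (0:ℝ)..x,
        (1 / Real.Gamma (1 - α)) * ∫ τ in (0:ℝ)..t, (t - τ) ^ (-α) * v ξ τ)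
      = (1 / Real.Gamma (1 - α))
          * (∫ τ in (0:ℝ)..t, (t - τ) ^ (-α) * S6.P2 U (x, τ))
        - (1 / Real.Gamma (1 - α))
          * ∫ τ in (0:ℝ)..t, (t - τ) ^ (-α) * deriv ψ₁ τ := by
    have s1 : (∫ ξ in (0:ℝ)..x,
          (1 / Real.Gamma (1 - α)) * ∫ τ in (0:ℝ)..t, (t - τ) ^ (-α) * v ξ τ)
        = (1 / Real.Gamma (1 - α)) * ∫ ξ in (0:ℝ)..x,
            ∫ τ in (0:ℝ)..t, (t - τ) ^ (-α) * S6.P2 (S6.P1 U) (ξ, τ) := by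
      simp_rw [F1]
      rw [intervalIntegral.integral_const_mul]
    have s2 : (∫ ξ in (0:ℝ)..x, ∫ τ in (0:ℝ)..t, (t - τ) ^ (-α) * S6.P2 (S6.P1 U) (ξ, τ))
        = ∫ τ in (0:ℝ)..t, ∫ ξ in (0:ℝ)..x, (t - τ) ^ (-α) * S6.P2 (S6.P1 U) (ξ, τ) :=
      S6.swapInt hx0 ht0 (by exact S6.intgH hUxtc hKm hKi hK0)
    have s3 : (∫ τ in (0:ℝ)..t, ∫ ξ in (0:ℝ)..x, (t - τ) ^ (-α) * S6.P2 (S6.P1 U) (ξ, τ))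
        = ∫ τ in (0:ℝ)..t, ((t - τ) ^ (-α) * S6.P2 U (x, τ)
            - (t - τ) ^ (-α) * S6.P2 U (0, τ)) := by
      apply intervalIntegral.integral_congr
      intro τ _
      dsimp only
      rw [intervalIntegral.integral_const_mul, hFxt τ]
      ring
    have i1 : IntervalIntegrable (fun τ => (t - τ) ^ (-α) * S6.P2 U (x, τ)) volume 0 t :=
      hKint.mul_continuousOn ((hUtc.comp (Continuous.prodMk_right x)).continuousOn)
    have i2 : IntervalIntegrable (fun τ => (t - τ) ^ (-α) * S6.P2 U (0, τ)) volume 0 t :=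
      hKint.mul_continuousOn ((hUtc.comp (Continuous.prodMk_right 0)).continuousOn)
    rw [s1, s2, s3, intervalIntegral.integral_sub i1 i2, hψae]
    ring
  -- PDE at (x, t)
  have hpde' := hpde x hx t ht
  have hut : ∀ τ, deriv (fun s => u x s) τ = S6.P2 U (x, τ) :=
    fun τ => S6.deriv_snd hUd x τ
  rw [show (∫ τ in (0:ℝ)..t, (t - τ) ^ (-α) * deriv (fun s => u x s) τ)
      = ∫ τ in (0:ℝ)..t, (t - τ) ^ (-α) * S6.P2 U (x, τ) by
        simp_rw [hut],
    show deriv (fun y => u y t) x = S6.P1 U (x, t) from S6.deriv_fst hUd x t] at hpde'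
  rw [hA, hB, hC, hD]
  linear_combination hpde'
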